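/- (The function Φ parametrizing the critical Hardy constant.) For every σ ∈ (−1,1) with σ ≠ 0 one has the identity 2 Γ((3−σ)/2) Γ((1+σ)/2) / (Γ(σ/2) Γ((2−σ)/2)) = (1−σ) tan(πσ/2), where Γ is the Gamma function. Moreover, the function Φ : (−1,1] → ℝ defined by Φ(σ) = (1−σ) tan(πσ/2) for σ ∈ (−1,1) and Φ(1) = 2/π is continuous and strictly increasing, satisfies Φ(0) = 0, attains its maximal value 2/π at σ = 1, and Φ(σ) → −∞ as σ → −1⁺. -/

import Mathlib

open Real Filter
open scoped Topology

noncomputable section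

/-- The function `Φ : (−1,1] → ℝ`, `Φ(σ) = (1−σ) tan(πσ/2)` for `σ ∈ (−1,1)` and
`Φ(1) = 2/π` (the value by continuity). -/
def PhiFun (σ : ℝ) : ℝ :=
  if σ = 1 then 2 / Real.pi else (1 - σ) * Real.tan (Real.pi * σ / 2)

/-- The smooth formula for `Φ` away from `σ = 1`. -/
def GFun (σ : ℝ) : ℝ := (1 - σ) * Real.tan (Real.pi * σ / 2)

lemma phi_eventuallyEq {x : ℝ} (hx : x ≠ 1) : PhiFun =ᶠ[𝓝 x] GFun := by
  filter_upwards [isOpen_compl_singleton.mem_nhds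
    (by simpa using hx : x ∈ ({(1 : ℝ)}ᶜ : Set ℝ))] with y hy
  simp only [PhiFun, GFun, if_neg (show y ≠ 1 by simpa using hy)]

lemma key_ineq {t : ℝ} (h1 : -(π / 2) < t) (h2 : t < π / 2) :
    Real.sin t * Real.cos t < π / 2 - t := by
  rcases le_or_gt t 0 with h | h
  · have hs : Real.sin t ≤ 0 :=
      Real.sin_nonpos_of_nonpos_of_neg_pi_le h (by linarith [Real.pi_pos])
    have hc : 0 < Real.cos t := Real.cos_pos_of_mem_Ioo ⟨h1, h2⟩
    nlinarith
  · have h3 : Real.sin (π - 2 * t) < π - 2 * t := Real.sin_lt (by linarith)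
    rw [Real.sin_pi_sub, Real.sin_two_mul] at h3
    linarith

lemma g_hasDeriv {x : ℝ} (hc : Real.cos (π * x / 2) ≠ 0) :
    HasDerivAt GFun
      (π / 2 * (1 - x) * (1 / Real.cos (π * x / 2) ^ 2) - Real.tan (π * x / 2)) x := by
  have hlin : HasDerivAt (fun σ : ℝ => π * σ / 2) (π / 2) x := by
    simpa using ((hasDerivAt_id x).const_mul π).div_const 2
  have htan : HasDerivAt (fun σ : ℝ => Real.tan (π * σ / 2))
      (1 / Real.cos (π * x / 2) ^ 2 * (π / 2)) x := by
    have := (Real.hasDerivAt_tan hc).comp x hlin; exact this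
  have h1 : HasDerivAt (fun σ : ℝ => 1 - σ) (-1) x := by
    simpa using (hasDerivAt_id x).const_sub 1
  have : HasDerivAt (fun σ => (1 - σ) * Real.tan (π * σ / 2)) _ x := h1.mul htan
  show HasDerivAt (fun σ => (1 - σ) * Real.tan (π * σ / 2)) _ x
  convert this using 1
  ring

lemma g_tendsto_one : Tendsto GFun (𝓝[≠] (1 : ℝ)) (𝓝 (2 / π)) := by
  have hpi := Real.pi_pos
  have hcosD : HasDerivAt (fun σ : ℝ => Real.cos (π * σ / 2)) (-(π / 2)) 1 := by
    have hlin : HasDerivAt (fun σ : ℝ => π * σ / 2) (π / 2) 1 := by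
      simpa using ((hasDerivAt_id (1 : ℝ)).const_mul π).div_const 2
    have h := (Real.hasDerivAt_cos (π * 1 / 2)).comp 1 hlin
    have h2 : π * 1 / 2 = π / 2 := by ring
    rw [h2] at h
    simpa [Real.sin_pi_div_two, Function.comp_def] using h
  have hslope : Tendsto (slope (fun σ : ℝ => Real.cos (π * σ / 2)) 1) (𝓝[≠] (1 : ℝ))
      (𝓝 (-(π / 2))) := hasDerivAt_iff_tendsto_slope.mp hcosD
  have hne : -(π / 2) ≠ 0 := by
    have : (0 : ℝ) < π / 2 := by positivity
    linarith
  have hdiv : Tendsto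
      (fun σ : ℝ => (-1) / slope (fun σ : ℝ => Real.cos (π * σ / 2)) 1 σ)
      (𝓝[≠] (1 : ℝ)) (𝓝 ((-1) / (-(π / 2)))) :=
    tendsto_const_nhds.div hslope hne
  have hval : (-1 : ℝ) / (-(π / 2)) = 2 / π := by
    field_simp
  rw [hval] at hdiv
  have hsin : Tendsto (fun σ : ℝ => Real.sin (π * σ / 2)) (𝓝[≠] (1 : ℝ)) (𝓝 1) := by
    have hc : Continuous fun σ : ℝ => Real.sin (π * σ / 2) :=
      Real.continuous_sin.comp ((continuous_const.mul continuous_id).div_const 2)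
    have := (hc.tendsto 1).mono_left (nhdsWithin_le_nhds (s := {(1 : ℝ)}ᶜ))
    have h2 : π * 1 / 2 = π / 2 := by ring
    rw [h2, Real.sin_pi_div_two] at this
    exact this
  have hmul := hsin.mul hdiv
  rw [one_mul] at hmul
  refine Tendsto.congr' ?_ hmul
  filter_upwards [self_mem_nhdsWithin] with σ hσ
  have hσ1 : σ ≠ 1 := by simpa using hσ
  have hsub : σ - 1 ≠ 0 := sub_ne_zero.mpr hσ1
  rw [slope_def_field]
  have hπ2 : π * 1 / 2 = π / 2 := by ring
  rw [hπ2, Real.cos_pi_div_two, sub_zero]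
  show Real.sin (π * σ / 2) * (-1 / (Real.cos (π * σ / 2) / (σ - 1))) = GFun σ
  rcases eq_or_ne (Real.cos (π * σ / 2)) 0 with hc | hc
  · simp [GFun, hc, Real.tan_eq_sin_div_cos]
  · rw [GFun, Real.tan_eq_sin_div_cos]
    field_simp
    ring

lemma phi_contOn : ContinuousOn PhiFun (Set.Ioc (-1 : ℝ) 1) := by
  have hpi := Real.pi_pos
  intro x hx
  rcases eq_or_ne x 1 with rfl | hx1
  · rw [← continuousWithinAt_diff_self]
    have h1 : PhiFun 1 = 2 / π := if_pos rfl
    unfold ContinuousWithinAt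
    rw [h1]
    have hsub : Set.Ioc (-1 : ℝ) 1 \ {1} ⊆ {(1 : ℝ)}ᶜ := fun y hy => hy.2
    refine Tendsto.congr' ?_ (g_tendsto_one.mono_left (nhdsWithin_mono _ hsub))
    filter_upwards [self_mem_nhdsWithin] with σ hσ
    exact (phi_eventuallyEq (show σ ≠ 1 from hσ.2)).self_of_nhds.symm
  · have hx' : -1 < x ∧ x < 1 := ⟨hx.1, lt_of_le_of_ne hx.2 hx1⟩
    have hc : 0 < Real.cos (π * x / 2) :=
      Real.cos_pos_of_mem_Ioo ⟨by nlinarith [hx'.1], by nlinarith [hx'.2]⟩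
    have hcg : ContinuousAt GFun x := (g_hasDeriv hc.ne').differentiableAt.continuousAt
    exact (hcg.congr (phi_eventuallyEq hx1).symm).continuousWithinAt

lemma phi_mono : StrictMonoOn PhiFun (Set.Ioc (-1 : ℝ) 1) := by
  have hpi := Real.pi_pos
  apply strictMonoOn_of_deriv_pos (convex_Ioc _ _) phi_contOn
  intro x hx
  rw [interior_Ioc] at hx
  have hc : 0 < Real.cos (π * x / 2) :=
    Real.cos_pos_of_mem_Ioo ⟨by nlinarith [hx.1], by nlinarith [hx.2]⟩
  rw [(phi_eventuallyEq hx.2.ne).deriv_eq, (g_hasDeriv hc.ne').deriv]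
  have hkey : Real.sin (π * x / 2) * Real.cos (π * x / 2) < π / 2 - π * x / 2 :=
    key_ineq (by nlinarith [hx.1]) (by nlinarith [hx.2])
  rw [Real.tan_eq_sin_div_cos]
  have heq : π / 2 * (1 - x) * (1 / Real.cos (π * x / 2) ^ 2) -
      Real.sin (π * x / 2) / Real.cos (π * x / 2)
      = (π / 2 * (1 - x) - Real.sin (π * x / 2) * Real.cos (π * x / 2)) /
        Real.cos (π * x / 2) ^ 2 := by
    field_simp
  rw [heq]
  apply div_pos _ (pow_pos hc 2)
  nlinarith

/-- The Gamma-function identity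
`2 Γ((3−σ)/2) Γ((1+σ)/2) / (Γ(σ/2) Γ((2−σ)/2)) = (1−σ) tan(πσ/2)` for `σ ∈ (−1,1)`, `σ ≠ 0`,
together with the properties of `Φ`: it is continuous and strictly increasing on `(−1,1]`,
vanishes at `0`, attains its maximal value `2/π` at `σ = 1`, and tends to `−∞` as `σ → −1⁺`. -/
theorem phi_properties :
    (∀ σ ∈ Set.Ioo (-1 : ℝ) 1, σ ≠ 0 →
      2 * Real.Gamma ((3 - σ) / 2) * Real.Gamma ((1 + σ) / 2) /
          (Real.Gamma (σ / 2) * Real.Gamma ((2 - σ) / 2))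
        = (1 - σ) * Real.tan (Real.pi * σ / 2)) ∧
    ContinuousOn PhiFun (Set.Ioc (-1 : ℝ) 1) ∧
    StrictMonoOn PhiFun (Set.Ioc (-1 : ℝ) 1) ∧
    PhiFun 0 = 0 ∧
    (∀ σ ∈ Set.Ioc (-1 : ℝ) 1, PhiFun σ ≤ 2 / Real.pi) ∧
    PhiFun 1 = 2 / Real.pi ∧
    Tendsto PhiFun (𝓝[>] (-1 : ℝ)) atBot := by
  have hpi := Real.pi_pos
  refine ⟨?_, phi_contOn, phi_mono, ?_, ?_, if_pos rfl, ?_⟩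
  · -- Gamma identity
    rintro σ ⟨h1, h2⟩ hσ0
    have hcos : 0 < Real.cos (π * σ / 2) :=
      Real.cos_pos_of_mem_Ioo ⟨by nlinarith, by nlinarith⟩
    have hsin : Real.sin (π * σ / 2) ≠ 0 := by
      rcases hσ0.lt_or_gt with h | h
      · exact (Real.sin_neg_of_neg_of_neg_pi_lt (by nlinarith) (by nlinarith)).ne
      · exact (Real.sin_pos_of_pos_of_lt_pi (by nlinarith) (by nlinarith)).ne'
    have hΓ3 : Real.Gamma ((3 - σ) / 2) = (1 - σ) / 2 * Real.Gamma ((1 - σ) / 2) := by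
      rw [show (3 - σ) / 2 = (1 - σ) / 2 + 1 by ring,
        Real.Gamma_add_one (show (1 - σ) / 2 ≠ 0 from ne_of_gt (by linarith))]
    have hA : Real.Gamma ((1 + σ) / 2) * Real.Gamma ((1 - σ) / 2) =
        π / Real.cos (π * σ / 2) := by
      have h := Real.Gamma_mul_Gamma_one_sub ((1 + σ) / 2)
      rw [show (1 : ℝ) - (1 + σ) / 2 = (1 - σ) / 2 by ring] at h
      rw [h, show π * ((1 + σ) / 2) = π * σ / 2 + π / 2 by ring,
        Real.sin_add_pi_div_two]
    have hB : Real.Gamma (σ / 2) * Real.Gamma ((2 - σ) / 2) =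
        π / Real.sin (π * σ / 2) := by
      have h := Real.Gamma_mul_Gamma_one_sub (σ / 2)
      rw [show (1 : ℝ) - σ / 2 = (2 - σ) / 2 by ring] at h
      rw [h, show π * (σ / 2) = π * σ / 2 by ring]
    rw [hΓ3, hB,
      show 2 * ((1 - σ) / 2 * Real.Gamma ((1 - σ) / 2)) * Real.Gamma ((1 + σ) / 2)
        = (1 - σ) * (Real.Gamma ((1 + σ) / 2) * Real.Gamma ((1 - σ) / 2)) by ring,
      hA, Real.tan_eq_sin_div_cos]
    rw [div_eq_iff (div_ne_zero Real.pi_ne_zero hsin)]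
    field_simp
    rw [mul_comm σ π, div_mul_cancel_right₀ hsin, one_div]
  · -- Phi 0 = 0
    norm_num [PhiFun]
  · -- max value
    intro σ hσ
    have h1 : PhiFun 1 = 2 / π := if_pos rfl
    rcases eq_or_ne σ 1 with rfl | h
    · exact h1.le
    · rw [← h1]
      exact (phi_mono hσ (Set.right_mem_Ioc.mpr (by norm_num))
        (lt_of_le_of_ne hσ.2 h)).le
  · -- atBot at -1
    have hmap : Tendsto (fun σ : ℝ => π * σ / 2) (𝓝[>] (-1 : ℝ)) (𝓝[>] (-(π / 2))) := by
      apply tendsto_nhdsWithin_of_tendsto_nhds_of_eventually_within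
      · have hc : Continuous fun σ : ℝ => π * σ / 2 :=
          (continuous_const.mul continuous_id).div_const 2
        have := (hc.tendsto (-1)).mono_left (nhdsWithin_le_nhds (s := Set.Ioi (-1 : ℝ)))
        rw [show π * (-1) / 2 = -(π / 2) by ring] at this
        exact this
      · filter_upwards [self_mem_nhdsWithin] with σ hσ
        have : (-1 : ℝ) < σ := hσ
        show -(π / 2) < π * σ / 2
        nlinarith
    have htan : Tendsto (fun σ : ℝ => Real.tan (π * σ / 2)) (𝓝[>] (-1 : ℝ)) atBot :=
      Real.tendsto_tan_neg_pi_div_two.comp hmap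
    have hconst : Tendsto (fun σ : ℝ => 1 - σ) (𝓝[>] (-1 : ℝ)) (𝓝 2) := by
      have h : Tendsto (fun σ : ℝ => 1 - σ) (𝓝 (-1 : ℝ)) (𝓝 (1 - (-1))) :=
        (continuous_const.sub continuous_id).tendsto (-1)
      norm_num at h
      exact h.mono_left nhdsWithin_le_nhds
    have hg : Tendsto GFun (𝓝[>] (-1 : ℝ)) atBot :=
      Tendsto.pos_mul_atBot two_pos hconst htan
    refine Tendsto.congr' ?_ hg
    filter_upwards [Ioo_mem_nhdsGT_of_mem (show (-1:ℝ) ∈ Set.Ico (-1:ℝ) (0:ℝ) from ⟨le_refl _, by norm_num⟩)]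
      with σ hσ
    have : σ ≠ 1 := by
      have := hσ.2
      intro h; rw [h] at this; norm_num at this
    exact ((phi_eventuallyEq this).self_of_nhds).symm

end
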